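/- Let E be a directed graph, u ∈ E^0 a vertex, and X_u the set of closed paths λ = f_1⋯f_n with s(λ) = r(λ) = u and r(f_i) ≠ u for all i < n. Then the corner algebra uAu of the path algebra A = KE is isomorphic to the free unital associative K-algebra on the set X_u. -/

import Mathlib

/-- A directed graph: vertices, edges, source and range maps. -/
structure DGraph : Type 1 where
  V : Type
  Edge : Type
  s : Edge → V
  r : Edge → V

namespace DGraph

/-- A list of edges is composable if consecutive edges match up. -/
def IsComposable (G : DGraph) (l : List G.Edge) : Prop :=
  l.Chain' (fun e f => G.r e = G.s f)

/-- A path in `G`: either a trivial path at a vertex, or a nonempty composable list of edges. -/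
def GPath (G : DGraph) : Type :=
  G.V ⊕ {l : List G.Edge // l ≠ [] ∧ G.IsComposable l}

namespace GPath

variable {G : DGraph}

/-- The source of a path. -/
def src : GPath G → G.V
  | Sum.inl v => v
  | Sum.inr l => G.s (l.1.head l.2.1)

/-- The range of a path. -/
def rng : GPath G → G.V
  | Sum.inl v => v
  | Sum.inr l => G.r (l.1.getLast l.2.1)

/-- The length of a path. -/
def length : GPath G → ℕ
  | Sum.inl _ => 0
  | Sum.inr l => l.1.length

/-- The trivial path at a vertex. -/
def ofVertex (v : G.V) : GPath G := Sum.inl v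

/-- The length-one path given by an edge. -/
def ofEdge (e : G.Edge) : GPath G :=
  Sum.inr ⟨[e], by refine ⟨by simp, ?_⟩; exact List.isChain_singleton _⟩

/-- Concatenation of composable paths. -/
def comp : (p q : GPath G) → p.rng = q.src → GPath G
  | Sum.inl _, q, _ => q
  | Sum.inr l, Sum.inl _, _ => Sum.inr l
  | Sum.inr l, Sum.inr m, h => Sum.inr ⟨l.1 ++ m.1, by
      refine ⟨by simp [l.2.1], l.2.2.append m.2.2 ?_⟩
      intro x hx y hy
      rw [List.getLast?_eq_getLast l.2.1] at hx
      rw [List.head?_eq_head m.2.1] at hy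
      cases hx
      cases hy
      exact h⟩

end GPath

end DGraph

open DGraph

/-- A realization of the path algebra of the graph `G` over the field `K`:
a `K`-algebra with a basis indexed by the paths of `G`, multiplying by concatenation. -/
structure PathAlgebraOn (K : Type) [Field K] (G : DGraph) (A : Type)
    [NonUnitalRing A] [Module K A] where
  basis : Module.Basis (GPath G) K A
  mul_comp : ∀ (p q : GPath G) (h : p.rng = q.src),
      basis p * basis q = basis (p.comp q h)
  mul_ncomp : ∀ p q : GPath G, p.rng ≠ q.src → basis p * basis q = 0

/-- The set of closed paths based at `u` that pass through `u` exactly at their two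
endpoints: `λ = f₁⋯fₙ` with `s(λ) = r(λ) = u` and `r(fᵢ) ≠ u` for `i < n`. -/
def firstReturns (G : DGraph) (u : G.V) : Set (GPath G) :=
  {p : GPath G | p.src = u ∧ p.rng = u ∧
    ∃ (l : List G.Edge) (h : l ≠ [] ∧ G.IsComposable l),
      p = Sum.inr ⟨l, h⟩ ∧ ∀ e ∈ l.dropLast, G.r e ≠ u}

namespace DGraph

variable {G : DGraph}

/-- A "first-return list" at `u`: a nonempty composable list of edges starting and ending
at `u` whose intermediate ranges avoid `u`. -/
def Ret (G : DGraph) (u : G.V) (l : List G.Edge) : Prop :=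
  ∃ h : l ≠ [], G.IsComposable l ∧ G.s (l.head h) = u ∧ G.r (l.getLast h) = u ∧
    ∀ e ∈ l.dropLast, G.r e ≠ u

lemma Ret.ne_nil {u : G.V} {l : List G.Edge} (h : Ret G u l) : l ≠ [] := h.1

lemma Ret.eq_of_prefix {u : G.V} {l₁ l₂ : List G.Edge}
    (h₁ : Ret G u l₁) (h₂ : Ret G u l₂) (h : l₁ <+: l₂) : l₁ = l₂ := by
  obtain ⟨hn₁, _, _, hl₁, _⟩ := h₁
  obtain ⟨hn₂, _, _, _, hd₂⟩ := h₂
  obtain ⟨c, rfl⟩ := h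
  rcases eq_or_ne c [] with rfl | hc
  · simp
  exfalso
  refine hd₂ (l₁.getLast hn₁) ?_ hl₁
  rw [List.dropLast_append_of_ne_nil hc]
  exact List.mem_append_left _ (List.getLast_mem hn₁)

lemma Ret.eq_of_append {u : G.V} {l₁ l₂ r₁ r₂ : List G.Edge}
    (h₁ : Ret G u l₁) (h₂ : Ret G u l₂) (h : l₁ ++ r₁ = l₂ ++ r₂) : l₁ = l₂ := by
  have p₁ : l₁ <+: l₂ ++ r₂ := h ▸ List.prefix_append _ _
  have p₂ : l₂ <+: l₂ ++ r₂ := List.prefix_append _ _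
  rcases le_total l₁.length l₂.length with hle | hle
  · exact h₁.eq_of_prefix h₂ (List.prefix_of_prefix_length_le p₁ p₂ hle)
  · exact (h₂.eq_of_prefix h₁ (List.prefix_of_prefix_length_le p₂ p₁ hle)).symm

lemma ret_flatten_unique {u : G.V} : ∀ (L₁ L₂ : List (List G.Edge)),
    (∀ b ∈ L₁, Ret G u b) → (∀ b ∈ L₂, Ret G u b) → L₁.flatten = L₂.flatten → L₁ = L₂ := by
  intro L₁
  induction L₁ with
  | nil =>
    intro L₂ _ h₂ h
    cases L₂ with
    | nil => rfl
    | cons b t =>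
      exfalso
      exact (h₂ b (by simp)).ne_nil (List.append_eq_nil_iff.mp h.symm).1
  | cons b₁ t₁ ih =>
    intro L₂ h₁ h₂ h
    cases L₂ with
    | nil =>
      exfalso
      exact (h₁ b₁ (by simp)).ne_nil (List.append_eq_nil_iff.mp h).1
    | cons b₂ t₂ =>
      simp only [List.flatten_cons] at h
      have hb : b₁ = b₂ :=
        (h₁ b₁ (by simp)).eq_of_append (h₂ b₂ (by simp)) h
      subst hb
      have ht : t₁ = t₂ := ih t₂ (fun b hb => h₁ b (by simp [hb]))
        (fun b hb => h₂ b (by simp [hb])) (List.append_cancel_left h)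
      rw [ht]

end DGraph
namespace DGraph

variable {G : DGraph}

lemma ret_factor_aux {u : G.V} : ∀ (n : ℕ) (l : List G.Edge), l.length ≤ n →
    G.IsComposable l → (∀ h : l ≠ [], G.s (l.head h) = u) →
    (∀ h : l ≠ [], G.r (l.getLast h) = u) →
    ∃ L : List (List G.Edge), (∀ b ∈ L, Ret G u b) ∧ L.flatten = l := by
  intro n
  induction n with
  | zero =>
    intro l hl _ _ _
    have : l = [] := List.length_eq_zero_iff.mp (Nat.le_zero.mp hl)
    exact ⟨[], by simp, by simp [this]⟩
  | succ n ih =>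
    intro l hl hc hs hr
    rcases eq_or_ne l [] with rfl | hne
    · exact ⟨[], by simp, by simp⟩
    by_cases hsplit : ∃ (l₁ l₂ : List G.Edge) (h₁ : l₁ ≠ []),
        l = l₁ ++ l₂ ∧ l₂ ≠ [] ∧ G.r (l₁.getLast h₁) = u
    · obtain ⟨l₁, l₂, h₁, rfl, h₂, hru⟩ := hsplit
      have hc₁ : G.IsComposable l₁ := hc.prefix (List.prefix_append _ _)
      have hc₂ : G.IsComposable l₂ := hc.suffix (List.suffix_append _ _)
      have hlen₁ : l₁.length ≤ n := by
        have : (l₁ ++ l₂).length = l₁.length + l₂.length := List.length_append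
        have h2pos : 0 < l₂.length := List.length_pos_iff.mpr h₂
        omega
      have hlen₂ : l₂.length ≤ n := by
        have : (l₁ ++ l₂).length = l₁.length + l₂.length := List.length_append
        have h1pos : 0 < l₁.length := List.length_pos_iff.mpr h₁
        omega
      -- boundary conditions
      have hs₁ : ∀ h : l₁ ≠ [], G.s (l₁.head h) = u := by
        intro h
        have := hs (by simp [h₁])
        rwa [List.head_append_of_ne_nil h₁] at this
      have hr₂ : ∀ h : l₂ ≠ [], G.r (l₂.getLast h) = u := by
        intro h
        have := hr (by simp [h₁])
        rwa [List.getLast_append_of_ne_nil _ h₂] at this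
      have hs₂ : ∀ h : l₂ ≠ [], G.s (l₂.head h) = u := by
        intro h
        have hj := (List.isChain_append.mp hc).2.2
        have := hj (l₁.getLast h₁) (List.getLast?_eq_getLast h₁ ▸ rfl)
          (l₂.head h) (List.head?_eq_head h ▸ rfl)
        rw [← this]
        exact hru
      obtain ⟨L₁, hL₁, hf₁⟩ := ih l₁ hlen₁ hc₁ hs₁ (fun _ => hru)
      obtain ⟨L₂, hL₂, hf₂⟩ := ih l₂ hlen₂ hc₂ hs₂ hr₂
      refine ⟨L₁ ++ L₂, ?_, by simp [hf₁, hf₂]⟩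
      intro b hb
      rcases List.mem_append.mp hb with hb | hb
      · exact hL₁ b hb
      · exact hL₂ b hb
    · have hRet : Ret G u l := by
        refine ⟨hne, hc, hs hne, hr hne, ?_⟩
        intro e he hreu
        obtain ⟨s', t', hst⟩ := List.append_of_mem he
        have hll : l = (s' ++ [e]) ++ (t' ++ [l.getLast hne]) := by
          conv_lhs => rw [← List.dropLast_append_getLast hne, hst]
          simp
        refine hsplit ⟨s' ++ [e], t' ++ [l.getLast hne], by simp, hll, by simp, ?_⟩
        rwa [List.getLast_append]
      exact ⟨[l], by simpa using hRet, by simp⟩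

lemma ret_factor {u : G.V} (l : List G.Edge) (hc : G.IsComposable l)
    (hs : ∀ h : l ≠ [], G.s (l.head h) = u) (hr : ∀ h : l ≠ [], G.r (l.getLast h) = u) :
    ∃ L : List (List G.Edge), (∀ b ∈ L, Ret G u b) ∧ L.flatten = l :=
  ret_factor_aux l.length l le_rfl hc hs hr

/-- The flatten of a list of first-return lists is composable, with the right endpoints. -/
lemma ret_flatten_spec {u : G.V} : ∀ L : List (List G.Edge), (∀ b ∈ L, Ret G u b) →
    G.IsComposable L.flatten ∧ (∀ h : L.flatten ≠ [],
      G.s (L.flatten.head h) = u ∧ G.r (L.flatten.getLast h) = u) := by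
  intro L
  induction L with
  | nil => exact fun _ => ⟨List.isChain_nil, by simp⟩
  | cons b t ih =>
    intro hL
    obtain ⟨hbn, hbc, hbs, hbr, -⟩ := hL b (by simp)
    obtain ⟨htc, hte⟩ := ih (fun b hb => hL b (by simp [hb]))
    simp only [List.flatten_cons]
    have hcomp : G.IsComposable (b ++ t.flatten) := by
      refine List.isChain_append.mpr ⟨hbc, htc, ?_⟩
      intro x hx y hy
      have hxe : x = b.getLast hbn := by
        rw [List.getLast?_eq_getLast hbn] at hx; exact (Option.some_inj.mp hx).symm
      have htn : t.flatten ≠ [] := by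
        intro hnil; rw [hnil] at hy; simp at hy
      have hye : y = t.flatten.head htn := by
        rw [List.head?_eq_head htn] at hy; exact (Option.some_inj.mp hy).symm
      rw [hxe, hye, hbr, (hte htn).1]
    refine ⟨hcomp, ?_⟩
    intro h
    constructor
    · rw [List.head_append_of_ne_nil hbn]; exact hbs
    · rcases eq_or_ne t.flatten [] with htn | htn
      · rw [List.getLast_append_left h htn]
        exact hbr
      · rw [List.getLast_append_of_ne_nil _ htn]
        exact (hte htn).2

end DGraph
namespace DGraph

variable {G : DGraph}

/-- The underlying edge list of a path. -/
def GPath.toList : GPath G → List G.Edge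
  | Sum.inl _ => []
  | Sum.inr l => l.1

lemma mem_firstReturns_ret {u : G.V} {p : GPath G} (hp : p ∈ firstReturns G u) :
    Ret G u p.toList ∧ p = Sum.inr ⟨p.toList, fun h => (by
      obtain ⟨-, -, l, hl, rfl, -⟩ := hp
      exact hl.1 h), by
      obtain ⟨-, -, l, hl, rfl, -⟩ := hp
      exact hl.2⟩ := by
  obtain ⟨hs, hr, l, hl, rfl, hd⟩ := hp
  exact ⟨⟨hl.1, hl.2, hs, hr, hd⟩, rfl⟩

lemma ret_mem_firstReturns {u : G.V} {l : List G.Edge} (h : Ret G u l) :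
    (Sum.inr ⟨l, h.1, by obtain ⟨h1, h2, -⟩ := h; exact h2⟩ : GPath G) ∈ firstReturns G u := by
  obtain ⟨h1, h2, h3, h4, h5⟩ := h
  exact ⟨h3, h4, l, _, rfl, h5⟩

/-- The edge list of a word of first returns. -/
def wordList (G : DGraph) (u : G.V) (w : List ↥(firstReturns G u)) : List G.Edge :=
  (w.map fun x => GPath.toList x.1).flatten

lemma wordList_ret (u : G.V) (w : List ↥(firstReturns G u)) :
    ∀ b ∈ w.map fun x => GPath.toList x.1, Ret G u b := by
  intro b hb
  obtain ⟨x, hx, rfl⟩ := List.mem_map.mp hb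
  exact (mem_firstReturns_ret x.2).1

lemma wordList_comp (u : G.V) (w : List ↥(firstReturns G u)) :
    G.IsComposable (wordList G u w) :=
  (ret_flatten_spec _ (wordList_ret u w)).1

lemma wordList_eq_nil_iff (u : G.V) (w : List ↥(firstReturns G u)) :
    wordList G u w = [] ↔ w = [] := by
  constructor
  · intro h
    cases w with
    | nil => rfl
    | cons x t =>
      exfalso
      unfold wordList at h
      simp only [List.map_cons, List.flatten_cons] at h
      exact (mem_firstReturns_ret x.2).1.ne_nil (List.append_eq_nil_iff.mp h).1
  · rintro rfl; rfl

lemma GPath.comp_congr {p p' q : GPath G} (hp : p = p') (h : p.rng = q.src) :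
    p.comp q h = p'.comp q (hp ▸ h) := by subst hp; rfl

lemma GPath.comp_congr' {p q q' : GPath G} (hq : q = q') (h : p.rng = q.src) :
    p.comp q h = p.comp q' (hq ▸ h) := by subst hq; rfl

lemma GPath.comp_inl_right (p : GPath G) (v : G.V) (h : p.rng = GPath.src (G := G) (Sum.inl v)) :
    p.comp (Sum.inl v) h = p := by
  cases p with
  | inl w => exact congrArg Sum.inl h.symm
  | inr l => rfl

open Classical in
/-- Concatenation of a word of first returns into a single path. -/
noncomputable def concat (G : DGraph) (u : G.V) (w : List ↥(firstReturns G u)) : GPath G :=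
  if h : wordList G u w = [] then Sum.inl u
  else Sum.inr ⟨wordList G u w, h, wordList_comp u w⟩

lemma concat_nil (u : G.V) : concat G u [] = Sum.inl u := by
  rw [concat]
  exact dif_pos rfl

lemma concat_ne_nil (u : G.V) {w : List ↥(firstReturns G u)} (hw : w ≠ []) :
    concat G u w = Sum.inr ⟨wordList G u w,
      fun h => hw ((wordList_eq_nil_iff u w).mp h), wordList_comp u w⟩ := by
  rw [concat]
  exact dif_neg (fun h => hw ((wordList_eq_nil_iff u w).mp h))

lemma src_concat (u : G.V) (w : List ↥(firstReturns G u)) : (concat G u w).src = u := by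
  rcases eq_or_ne w [] with rfl | hw
  · rw [concat_nil]; rfl
  · rw [concat_ne_nil u hw]
    exact ((ret_flatten_spec _ (wordList_ret u w)).2 _).1

lemma rng_concat (u : G.V) (w : List ↥(firstReturns G u)) : (concat G u w).rng = u := by
  rcases eq_or_ne w [] with rfl | hw
  · rw [concat_nil]; rfl
  · rw [concat_ne_nil u hw]
    exact ((ret_flatten_spec _ (wordList_ret u w)).2 _).2

lemma concat_injective (u : G.V) : Function.Injective (concat G u) := by
  intro w₁ w₂ h
  rcases eq_or_ne w₁ [] with rfl | h₁ <;> rcases eq_or_ne w₂ [] with rfl | h₂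
  · rfl
  · rw [concat_nil, concat_ne_nil u h₂] at h; exact absurd h (by simp)
  · rw [concat_nil, concat_ne_nil u h₁] at h; exact absurd h (by simp)
  · rw [concat_ne_nil u h₁, concat_ne_nil u h₂] at h
    have hl : wordList G u w₁ = wordList G u w₂ := by
      have := Sum.inr.inj h
      exact congrArg Subtype.val this
    have hmap : (w₁.map fun x => GPath.toList x.1) = (w₂.map fun x => GPath.toList x.1) :=
      ret_flatten_unique _ _ (wordList_ret u w₁) (wordList_ret u w₂) hl
    have hinj : Function.Injective fun x : ↥(firstReturns G u) => GPath.toList x.1 := by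
      intro x y hxy
      have hx := (mem_firstReturns_ret x.2).2
      have hy := (mem_firstReturns_ret y.2).2
      apply Subtype.ext
      rw [hx, hy]
      exact congrArg Sum.inr (Subtype.ext hxy)
    exact List.map_injective_iff.mpr hinj hmap

lemma concat_surjective (u : G.V) (p : GPath G) (hs : p.src = u) (hr : p.rng = u) :
    ∃ w : List ↥(firstReturns G u), concat G u w = p := by
  cases p with
  | inl v =>
    refine ⟨[], ?_⟩
    rw [concat_nil]
    exact congrArg Sum.inl hs.symm
  | inr l =>
    obtain ⟨L, hL, hflat⟩ := ret_factor l.1 l.2.2 (fun _ => hs) (fun _ => hr)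
    refine ⟨L.attach.map fun b => ⟨_, ret_mem_firstReturns (hL b.1 b.2)⟩, ?_⟩
    have hw : wordList G u (L.attach.map fun b => ⟨_, ret_mem_firstReturns (hL b.1 b.2)⟩) =
        l.1 := by
      rw [wordList, List.map_map]
      have : ((fun x : ↥(firstReturns G u) => GPath.toList x.1) ∘
          fun b : {x // x ∈ L} => (⟨_, ret_mem_firstReturns (hL b.1 b.2)⟩ :
            ↥(firstReturns G u))) = fun b : {x // x ∈ L} => b.1 := rfl
      rw [this]
      simpa using hflat
    have hnn : l.1 ≠ [] := l.2.1
    have hwne : (L.attach.map fun b => (⟨_, ret_mem_firstReturns (hL b.1 b.2)⟩ :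
        ↥(firstReturns G u))) ≠ [] := by
      intro hh
      exact hnn (by rw [← hw, hh]; rfl)
    rw [concat_ne_nil u hwne]
    exact congrArg Sum.inr (Subtype.ext hw)

lemma wordList_append (u : G.V) (w₁ w₂ : List ↥(firstReturns G u)) :
    wordList G u (w₁ ++ w₂) = wordList G u w₁ ++ wordList G u w₂ := by
  rw [wordList, List.map_append, List.flatten_append]; rfl

lemma concat_append (u : G.V) (w₁ w₂ : List ↥(firstReturns G u)) :
    concat G u (w₁ ++ w₂) = (concat G u w₁).comp (concat G u w₂)
      (by rw [rng_concat, src_concat]) := by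
  rcases eq_or_ne w₁ [] with rfl | h₁
  · rw [GPath.comp_congr (concat_nil u)]
    rfl
  rcases eq_or_ne w₂ [] with rfl | h₂
  · rw [List.append_nil, GPath.comp_congr' (concat_nil u), GPath.comp_inl_right]
  · have h12 : w₁ ++ w₂ ≠ [] := by simp [h₁]
    refine (concat_ne_nil u h12).trans ?_
    refine Eq.trans ?_ (GPath.comp_congr (concat_ne_nil u h₁) _).symm
    refine Eq.trans ?_ (GPath.comp_congr' (concat_ne_nil u h₂) _).symm
    exact congrArg Sum.inr (Subtype.ext (wordList_append u w₁ w₂))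

end DGraph
section FreeAlgBasis

variable {K : Type} [Field K] {X : Type}

lemma basisFreeMonoid_apply (w : FreeMonoid X) :
    FreeAlgebra.basisFreeMonoid K X w =
      (FreeAlgebra.equivMonoidAlgebraFreeMonoid (R := K) (X := X)).symm
        (MonoidAlgebra.single w 1) := by
  simp only [FreeAlgebra.basisFreeMonoid, Module.Basis.map_apply]
  rfl

lemma basisFreeMonoid_one :
    FreeAlgebra.basisFreeMonoid K X 1 = 1 := by
  rw [basisFreeMonoid_apply]
  rw [show (MonoidAlgebra.single (1 : FreeMonoid X) (1 : K)) = 1 from rfl, map_one]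

lemma basisFreeMonoid_mul (w₁ w₂ : FreeMonoid X) :
    FreeAlgebra.basisFreeMonoid K X (w₁ * w₂) =
      FreeAlgebra.basisFreeMonoid K X w₁ * FreeAlgebra.basisFreeMonoid K X w₂ := by
  rw [basisFreeMonoid_apply, basisFreeMonoid_apply, basisFreeMonoid_apply, ← map_mul,
    MonoidAlgebra.single_mul_single, one_mul]

end FreeAlgBasis
/-- the corner `uAu` of a path algebra is isomorphic to the free unital
associative algebra on `X_u`. -/
theorem stmt5 (K : Type) [Field K] (G : DGraph) (u : G.V)
    (A : Type) [NonUnitalRing A] [Module K A] [SMulCommClass K A A] [IsScalarTower K A A]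
    (PA : PathAlgebraOn K G A) :
    ∃ φ : FreeAlgebra K (firstReturns G u) →ₗ[K] A,
      Function.Injective φ ∧
      (∀ x y : FreeAlgebra K (firstReturns G u), φ (x * y) = φ x * φ y) ∧
      φ 1 = PA.basis (GPath.ofVertex u) ∧
      Set.range φ = {a : A | ∃ b : A,
        a = PA.basis (GPath.ofVertex u) * b * PA.basis (GPath.ofVertex u)} := by
  classical
  set b := FreeAlgebra.basisFreeMonoid K ↥(firstReturns G u) with hbdef
  set c : FreeMonoid ↥(firstReturns G u) → A :=
    fun w => PA.basis (concat G u (FreeMonoid.toList w)) with hcdef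
  set φ := b.constr K c with hφdef
  have hφb : ∀ w, φ (b w) = c w := fun w => b.constr_basis K c w
  set e : A := PA.basis (GPath.ofVertex u) with hedef
  -- injectivity of the index map
  have hinj : Function.Injective fun w : FreeMonoid ↥(firstReturns G u) =>
      concat G u (FreeMonoid.toList w) := fun w₁ w₂ h =>
    FreeMonoid.toList.injective (concat_injective u h)
  have hli : LinearIndependent K c := PA.basis.linearIndependent.comp _ hinj
  -- injectivity of φ
  have hkeyrepr : ∀ z, φ z = Finsupp.linearCombination K c (b.repr z) := by
    intro z
    rw [hφdef, Module.Basis.constr_apply, Finsupp.linearCombination_apply]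
  have hφinj : Function.Injective φ := by
    intro x y hxy
    have h0 : Finsupp.linearCombination K c (b.repr x - b.repr y) = 0 := by
      rw [map_sub, ← hkeyrepr x, ← hkeyrepr y, hxy, sub_self]
    have h1 : b.repr x - b.repr y = 0 := linearIndependent_iff.mp hli _ h0
    exact b.repr.injective (sub_eq_zero.mp h1)
  -- multiplicativity
  have hkey : ∀ w₁ w₂, φ (b w₁ * b w₂) = φ (b w₁) * φ (b w₂) := by
    intro w₁ w₂
    rw [← basisFreeMonoid_mul, hφb, hφb, hφb]
    have h1 : (concat G u (FreeMonoid.toList w₁)).rng =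
        (concat G u (FreeMonoid.toList w₂)).src := by rw [rng_concat, src_concat]
    show PA.basis _ = PA.basis _ * PA.basis _
    rw [PA.mul_comp _ _ h1, ← concat_append]
    rfl
  have hstep1 : ∀ (w₁ : FreeMonoid ↥(firstReturns G u)) (y),
      φ (b w₁ * y) = φ (b w₁) * φ y := by
    intro w₁ y
    have h := b.ext (f₁ := φ.comp (LinearMap.mulLeft K (b w₁)))
      (f₂ := (LinearMap.mulLeft K (φ (b w₁))).comp φ) (fun w₂ => by simpa using hkey w₁ w₂)
    simpa using LinearMap.congr_fun h y
  have hmul : ∀ x y, φ (x * y) = φ x * φ y := by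
    intro x y
    have h := b.ext (f₁ := φ.comp (LinearMap.mulRight K y))
      (f₂ := (LinearMap.mulRight K (φ y)).comp φ) (fun w₁ => by simpa using hstep1 w₁ y)
    simpa using LinearMap.congr_fun h x
  -- unit
  have hone : φ 1 = e := by
    rw [← basisFreeMonoid_one (K := K) (X := ↥(firstReturns G u)), hφb]
    show PA.basis (concat G u []) = e
    rw [concat_nil]
    rfl
  -- corner identities
  have hec : ∀ p : GPath G, p.src = u → e * PA.basis p = PA.basis p := by
    intro p hp
    have h : (GPath.ofVertex u : GPath G).rng = p.src := hp.symm
    rw [hedef, PA.mul_comp _ _ h]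
    rfl
  have hce : ∀ p : GPath G, p.rng = u → PA.basis p * e = PA.basis p := by
    intro p hp
    have h : p.rng = (GPath.ofVertex u : GPath G).src := hp
    rw [hedef, PA.mul_comp _ _ h]
    exact congrArg PA.basis (GPath.comp_inl_right p u h)
  have hT : ∀ x, e * φ x * e = φ x := by
    have h := b.ext (f₁ := ((LinearMap.mulRight K e).comp (LinearMap.mulLeft K e)).comp φ)
      (f₂ := φ) (fun w => by
        simp only [LinearMap.comp_apply, LinearMap.mulLeft_apply, LinearMap.mulRight_apply]
        rw [hφb]
        show e * PA.basis _ * e = PA.basis _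
        rw [hec _ (src_concat u _), hce _ (rng_concat u _)])
    intro x
    simpa using LinearMap.congr_fun h x
  refine ⟨φ, hφinj, hmul, hone, ?_⟩
  ext a
  simp only [Set.mem_range, Set.mem_setOf_eq]
  constructor
  · rintro ⟨x, rfl⟩
    exact ⟨φ x, (hT x).symm⟩
  · rintro ⟨bb, rfl⟩
    have hmem : ∀ a0 : A, e * a0 * e ∈ LinearMap.range φ := by
      intro a0
      have ha0 : a0 ∈ Submodule.span K (Set.range PA.basis) := by
        rw [Module.Basis.span_eq]; trivial
      induction ha0 using Submodule.span_induction with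
      | mem x hx =>
        obtain ⟨p, rfl⟩ := hx
        by_cases hps : p.src = u
        · by_cases hpr : p.rng = u
          · obtain ⟨w, hw⟩ := concat_surjective u p hps hpr
            refine LinearMap.mem_range.mpr ⟨b (FreeMonoid.ofList w), ?_⟩
            rw [hφb, hec p hps, hce p hpr]
            show PA.basis (concat G u (FreeMonoid.toList (FreeMonoid.ofList w))) = _
            rw [FreeMonoid.toList_ofList, hw]
          · rw [hec p hps, hedef, PA.mul_ncomp p (GPath.ofVertex u) (fun hh => hpr hh)]
            exact zero_mem _
        · rw [hedef, PA.mul_ncomp (GPath.ofVertex u) p (fun hh => hps hh.symm), zero_mul]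
          exact zero_mem _
      | zero =>
        rw [mul_zero, zero_mul]
        exact zero_mem _
      | add x y hx hy ihx ihy =>
        rw [mul_add, add_mul]
        exact add_mem ihx ihy
      | smul a x hx ih =>
        rw [mul_smul_comm, smul_mul_assoc]
        exact Submodule.smul_mem _ _ ih
    obtain ⟨x, hx⟩ := LinearMap.mem_range.mp (hmem bb)
    exact ⟨x, hx⟩
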